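/- If σ is a chip configuration on K_n with activity a(σ) = p/q in lowest terms, then the eventual period of σ equals q. -/

import Mathlib

open Finset

/-- Number of unstable vertices of a chip configuration on `K n`. -/
def chipR (n : ℕ) (σ : Fin n → ℕ) : ℕ :=
  (Finset.univ.filter (fun v => n ≤ σ v)).card

/-- Parallel chip-firing update on the complete graph `K n`. -/
def chipU (n : ℕ) (σ : Fin n → ℕ) : Fin n → ℕ :=
  fun v => if n ≤ σ v then σ v + chipR n σ - n else σ v + chipR n σ

/-- Total number of firings in the first `t` updates. -/
def chipAlpha (n : ℕ) (σ : Fin n → ℕ) (t : ℕ) : ℕ :=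
  ∑ s ∈ Finset.range t, chipR n ((chipU n)^[s] σ)

/-- Number of times vertex `v` fires in the first `t` updates. -/
def odometer (n : ℕ) (σ : Fin n → ℕ) (t : ℕ) (v : Fin n) : ℕ :=
  ((Finset.range t).filter (fun s => n ≤ (chipU n)^[s] σ v)).card

/-- `a` is the activity of `σ`. -/
def Activity (n : ℕ) (σ : Fin n → ℕ) (a : ℝ) : Prop :=
  Filter.Tendsto (fun t : ℕ => (chipAlpha n σ t : ℝ) / (n * t)) Filter.atTop (nhds a)

/-- A chip configuration is confined if all heights are at most `2n-1`
and the heights differ pairwise by at most `n-1`. -/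
def Confined (n : ℕ) (σ : Fin n → ℕ) : Prop :=
  (∀ v, σ v ≤ 2 * n - 1) ∧ ∀ v w, σ v ≤ σ w + (n - 1)

/-- The eventual period: least `m ≥ 1` with `U^{t+m} σ = U^t σ` for all large `t`. -/
noncomputable def eventualPeriod (n : ℕ) (σ : Fin n → ℕ) : ℕ :=
  sInf {m | 1 ≤ m ∧ ∃ t₀, ∀ t ≥ t₀, (chipU n)^[t + m] σ = (chipU n)^[t] σ}

/-- The transient length of the dynamics started at `σ`. -/
noncomputable def transientLength (n : ℕ) (σ : Fin n → ℕ) : ℕ :=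
  sInf {t | ∃ t' > t, (chipU n)^[t'] σ = (chipU n)^[t] σ}

lemma chipR_le (n : ℕ) (σ : Fin n → ℕ) : chipR n σ ≤ n := by
  classical
  have := Finset.card_filter_le (Finset.univ : Finset (Fin n)) (fun v => n ≤ σ v)
  simpa [chipR] using this

lemma chipAlpha_succ (n : ℕ) (σ : Fin n → ℕ) (t : ℕ) :
    chipAlpha n σ (t+1) = chipAlpha n σ t + chipR n ((chipU n)^[t] σ) := by
  simp [chipAlpha, Finset.sum_range_succ]

lemma odometer_succ (n : ℕ) (σ : Fin n → ℕ) (t : ℕ) (v : Fin n) :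
    odometer n σ (t+1) v =
      odometer n σ t v + (if n ≤ (chipU n)^[t] σ v then 1 else 0) := by
  classical
  simp [odometer, Finset.range_add_one, Finset.filter_insert]
  split <;> simp [Finset.card_insert_of_notMem]

lemma conservation (n : ℕ) (σ : Fin n → ℕ) (t : ℕ) (v : Fin n) :
    (chipU n)^[t] σ v + n * odometer n σ t v = σ v + chipAlpha n σ t := by
  induction t with
  | zero => simp [odometer, chipAlpha]
  | succ t ih =>
    have hstep : (chipU n)^[t+1] σ v = chipU n ((chipU n)^[t] σ) v := by
      rw [Function.iterate_succ_apply']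
    rw [hstep, chipAlpha_succ, odometer_succ]
    set τ := (chipU n)^[t] σ with hτ
    by_cases h : n ≤ τ v
    · have hr : n ≤ τ v + chipR n τ := le_trans h (Nat.le_add_right _ _)
      simp only [chipU, if_pos h, Nat.mul_add, Nat.mul_one]
      omega
    · simp only [chipU, if_neg h, Nat.mul_add, Nat.mul_one, Nat.mul_zero]
      omega

lemma alpha_eq_sum (n : ℕ) (σ : Fin n → ℕ) (t : ℕ) :
    chipAlpha n σ t = ∑ v, odometer n σ t v := by
  classical
  simp only [chipAlpha, odometer, chipR, Finset.card_filter]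
  rw [Finset.sum_comm]

lemma chipU_bounded (n : ℕ) (σ : Fin n → ℕ) (B : ℕ) (hB : 2 * n ≤ B + 1)
    (h : ∀ v, σ v ≤ B) : ∀ v, chipU n σ v ≤ B := by
  intro v
  have hr := chipR_le n σ
  have hv := h v
  by_cases hf : n ≤ σ v
  · simp only [chipU, if_pos hf]; omega
  · simp only [chipU, if_neg hf]; omega

lemma orbit_bounded (n : ℕ) (σ : Fin n → ℕ) (B : ℕ) (hB : 2 * n ≤ B + 1)
    (h : ∀ v, σ v ≤ B) : ∀ t v, (chipU n)^[t] σ v ≤ B := by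
  intro t
  induction t with
  | zero => simpa using h
  | succ t ih =>
    intro v
    rw [Function.iterate_succ_apply']
    exact chipU_bounded n _ B hB ih v

lemma exists_period (n : ℕ) (σ : Fin n → ℕ) :
    ∃ m, 1 ≤ m ∧ ∃ t₀, ∀ t ≥ t₀, (chipU n)^[t + m] σ = (chipU n)^[t] σ := by
  classical
  set B := 2 * n + Finset.univ.sup σ with hBdef
  have hB : 2 * n ≤ B + 1 := by omega
  have h0 : ∀ v, σ v ≤ B := fun v => le_trans (Finset.le_sup (Finset.mem_univ v)) (by omega)
  have hbd := orbit_bounded n σ B hB h0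
  set f : ℕ → (Fin n → Fin (B + 1)) :=
    fun t v => ⟨(chipU n)^[t] σ v, Nat.lt_succ_of_le (hbd t v)⟩ with hf
  obtain ⟨a, b, hab, heq⟩ := Finite.exists_ne_map_eq_of_infinite f
  wlog hlt : a < b generalizing a b
  · exact this b a (Ne.symm hab) heq.symm (by omega)
  have hconf : (chipU n)^[b] σ = (chipU n)^[a] σ := by
    funext v
    have h3 : f a v = f b v := congrFun heq v
    have h4 : ((f a v : Fin (B+1)) : ℕ) = ((f b v : Fin (B+1)) : ℕ) := congrArg Fin.val h3
    simpa [hf] using h4.symm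
  refine ⟨b - a, by omega, a, fun t ht => ?_⟩
  have h1 : t + (b - a) = (t - a) + b := by omega
  have h2 : t = (t - a) + a := by omega
  rw [h1, Function.iterate_add_apply, hconf, ← Function.iterate_add_apply, ← h2]

lemma iterate_period (n m : ℕ) (τ : Fin n → ℕ) (hpure : (chipU n)^[m] τ = τ) :
    ∀ t, (chipU n)^[t + m] τ = (chipU n)^[t] τ := by
  intro t
  rw [Function.iterate_add_apply, hpure]

lemma iterate_mod (n m : ℕ) (hm : 1 ≤ m) (τ : Fin n → ℕ)
    (hpure : (chipU n)^[m] τ = τ) :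
    ∀ t, (chipU n)^[t] τ = (chipU n)^[t % m] τ := by
  have hmul : ∀ j, (chipU n)^[m * j] τ = τ := by
    intro j
    induction j with
    | zero => simp
    | succ j ih =>
      have h : m * (j + 1) = m + m * j := by ring
      rw [h, Function.iterate_add_apply, ih, hpure]
  intro t
  conv_lhs => rw [← Nat.mod_add_div t m]
  rw [Function.iterate_add_apply, hmul]

lemma chipR_bounds (n : ℕ) (τ : Fin n → ℕ)
    (hnofix : ∀ t, chipU n ((chipU n)^[t] τ) ≠ (chipU n)^[t] τ) :
    ∀ t, 1 ≤ chipR n ((chipU n)^[t] τ) ∧ chipR n ((chipU n)^[t] τ) + 1 ≤ n := by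
  classical
  intro t
  set ρ := (chipU n)^[t] τ with hρ
  have hr := chipR_le n ρ
  constructor
  · by_contra h
    push_neg at h
    have hr0 : chipR n ρ = 0 := by omega
    have hempty : ∀ v, ¬ (n ≤ ρ v) := by
      intro v hv
      have hmem : v ∈ Finset.univ.filter (fun v => n ≤ ρ v) := by simp [hv]
      have hpos : 0 < chipR n ρ := Finset.card_pos.mpr ⟨v, hmem⟩
      omega
    apply hnofix t
    funext v
    show chipU n ρ v = ρ v
    simp [chipU, hempty v, hr0]
  · by_contra h
    push_neg at h
    have hrn : chipR n ρ = n := by omega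
    have huniv : (Finset.univ.filter (fun v => n ≤ ρ v)) = Finset.univ :=
      Finset.eq_univ_of_card _ (by rw [Fintype.card_fin]; exact hrn)
    have hall : ∀ v, n ≤ ρ v := by
      intro v
      have hmem : v ∈ Finset.univ.filter (fun v => n ≤ ρ v) := by
        rw [huniv]; exact Finset.mem_univ v
      exact (Finset.mem_filter.mp hmem).2
    apply hnofix t
    funext v
    show chipU n ρ v = ρ v
    simp [chipU, hall v, hrn]

lemma height_bound (n m : ℕ) (hn : 0 < n) (hm : 1 ≤ m) (τ : Fin n → ℕ)
    (hpure : (chipU n)^[m] τ = τ)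
    (hr : ∀ t, 1 ≤ chipR n ((chipU n)^[t] τ) ∧ chipR n ((chipU n)^[t] τ) + 1 ≤ n) :
    ∀ t v, (chipU n)^[t] τ v + 2 ≤ 2 * n := by
  classical
  set M := (Finset.range m).sup (fun t => Finset.univ.sup (fun v => (chipU n)^[t] τ v)) with hM
  have hbound : ∀ t < m, ∀ v, (chipU n)^[t] τ v ≤ M := by
    intro t ht v
    have h1 : (chipU n)^[t] τ v ≤ Finset.univ.sup (fun v => (chipU n)^[t] τ v) :=
      Finset.le_sup (Finset.mem_univ v)
    have h2 : Finset.univ.sup (fun v => (chipU n)^[t] τ v) ≤ M :=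
      Finset.le_sup (f := fun t => Finset.univ.sup (fun v => (chipU n)^[t] τ v))
        (Finset.mem_range.mpr ht)
    exact le_trans h1 h2
  have hMb : M + 2 ≤ 2 * n := by
    obtain ⟨t', ht', hts⟩ := Finset.exists_mem_eq_sup (Finset.range m)
      ⟨0, Finset.mem_range.mpr hm⟩ (fun t => Finset.univ.sup (fun v => (chipU n)^[t] τ v))
    obtain ⟨v', _, hvs⟩ := Finset.exists_mem_eq_sup (Finset.univ : Finset (Fin n))
      ⟨⟨0, hn⟩, Finset.mem_univ _⟩ (fun v => (chipU n)^[t'] τ v)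
    have ht'm : t' < m := Finset.mem_range.mp ht'
    have hMeq : (chipU n)^[t'] τ v' = M := by rw [hM, hts, ← hvs]
    obtain ⟨p, hpm, hstep⟩ :
        ∃ p, p < m ∧ chipU n ((chipU n)^[p] τ) = (chipU n)^[t'] τ := by
      rcases Nat.eq_zero_or_pos t' with h0 | h0
      · refine ⟨m - 1, by omega, ?_⟩
        have e : m - 1 + 1 = m := by omega
        calc chipU n ((chipU n)^[m-1] τ) = (chipU n)^[(m-1)+1] τ :=
              (Function.iterate_succ_apply' _ _ _).symm
          _ = (chipU n)^[t'] τ := by rw [e, hpure, h0]; simp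
      · refine ⟨t' - 1, by omega, ?_⟩
        have e : t' - 1 + 1 = t' := by omega
        calc chipU n ((chipU n)^[t'-1] τ) = (chipU n)^[(t'-1)+1] τ :=
              (Function.iterate_succ_apply' _ _ _).symm
          _ = (chipU n)^[t'] τ := by rw [e]
    have hpv : (chipU n)^[p] τ v' ≤ M := hbound p hpm v'
    have hrp := hr p
    have hkey : chipU n ((chipU n)^[p] τ) v' = M := by rw [hstep, hMeq]
    by_cases hf : n ≤ (chipU n)^[p] τ v'
    · exfalso
      simp only [chipU, if_pos hf] at hkey
      omega
    · simp only [chipU, if_neg hf] at hkey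
      omega
  intro t v
  rw [iterate_mod n m hm τ hpure t]
  have := hbound (t % m) (Nat.mod_lt t hm) v
  omega

/-- Auxiliary: the circle-map lift. -/
def chipN (n : ℕ) (τ : Fin n → ℕ) (x : ℕ) : ℕ :=
  ∑ v, (τ v + x) / n

lemma odometer_formula (n : ℕ) (τ : Fin n → ℕ)
    (hh : ∀ t v, (chipU n)^[t] τ v + 2 ≤ 2 * n) :
    ∀ t v, odometer n τ (t + 1) v = (τ v + chipAlpha n τ t) / n := by
  intro t v
  have hc := conservation n τ t v
  have hb := hh t v
  rw [odometer_succ]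
  by_cases hf : n ≤ (chipU n)^[t] τ v
  · rw [if_pos hf]
    refine (Nat.div_eq_of_lt_le ?_ ?_).symm
    · have e : (odometer n τ t v + 1) * n = n * odometer n τ t v + n := by ring
      omega
    · have e : (odometer n τ t v + 1 + 1) * n = n * odometer n τ t v + 2 * n := by ring
      omega
  · rw [if_neg hf]
    refine (Nat.div_eq_of_lt_le ?_ ?_).symm
    · have e : (odometer n τ t v + 0) * n = n * odometer n τ t v := by ring
      omega
    · have e : (odometer n τ t v + 0 + 1) * n = n * odometer n τ t v + n := by ring
      omega

lemma alpha_recursion (n : ℕ) (τ : Fin n → ℕ)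
    (hh : ∀ t v, (chipU n)^[t] τ v + 2 ≤ 2 * n) :
    ∀ t, chipAlpha n τ (t + 1) = chipN n τ (chipAlpha n τ t) := by
  intro t
  rw [alpha_eq_sum, chipN]
  exact Finset.sum_congr rfl (fun v _ => odometer_formula n τ hh t v)

lemma alpha_iterate (n : ℕ) (τ : Fin n → ℕ)
    (hh : ∀ t v, (chipU n)^[t] τ v + 2 ≤ 2 * n) :
    ∀ t, chipAlpha n τ t = (chipN n τ)^[t] 0 := by
  intro t
  induction t with
  | zero => simp [chipAlpha]
  | succ t ih =>
    rw [alpha_recursion n τ hh t, ih, Function.iterate_succ_apply']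

lemma chipN_mono (n : ℕ) (τ : Fin n → ℕ) : Monotone (chipN n τ) := by
  intro x y hxy
  exact Finset.sum_le_sum (fun v _ => Nat.div_le_div_right (by omega))

lemma chipN_shift (n : ℕ) (hn : 0 < n) (τ : Fin n → ℕ) (x j : ℕ) :
    chipN n τ (x + n * j) = chipN n τ x + n * j := by
  unfold chipN
  have h : ∀ v : Fin n, (τ v + (x + n * j)) / n = (τ v + x) / n + j := by
    intro v
    have e : τ v + (x + n * j) = (τ v + x) + j * n := by ring
    rw [e, Nat.add_mul_div_right _ _ hn]
  rw [Finset.sum_congr rfl (fun v _ => h v), Finset.sum_add_distrib]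
  simp [Finset.card_univ, mul_comm]

lemma chipN_iter_shift (n : ℕ) (hn : 0 < n) (τ : Fin n → ℕ) (s x j : ℕ) :
    (chipN n τ)^[s] (x + n * j) = (chipN n τ)^[s] x + n * j := by
  induction s generalizing x with
  | zero => simp
  | succ s ih =>
    rw [Function.iterate_succ_apply, Function.iterate_succ_apply,
      chipN_shift n hn τ x j, ih]

lemma chain_lemma (H : ℕ → ℕ) (hmono : Monotone H) (d : ℕ) (hd : 1 ≤ d)
    (γ : ℕ → ℕ) (hstep : ∀ i < d, γ (i + 1) = H (γ i)) (hcyc : γ d = γ 0) :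
    γ 1 = γ 0 := by
  rcases le_total (γ 1) (γ 0) with h | h
  · have hdesc : ∀ i, i < d → γ (i + 1) ≤ γ i := by
      intro i
      induction i with
      | zero => intro _; simpa using h
      | succ i ih =>
        intro hi
        calc γ (i + 1 + 1) = H (γ (i + 1)) := hstep (i + 1) hi
          _ ≤ H (γ i) := hmono (ih (by omega))
          _ = γ (i + 1) := (hstep i (by omega)).symm
    have hge : ∀ j, 1 ≤ j → j ≤ d → γ j ≤ γ 1 := by
      intro j
      induction j with
      | zero => omega
      | succ j ih =>
        intro _ hj
        rcases Nat.eq_zero_or_pos j with h0 | h0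
        · subst h0; simp
        · exact le_trans (hdesc j (by omega)) (ih h0 (by omega))
    have := hge d hd le_rfl
    omega
  · have hasc : ∀ i, i < d → γ i ≤ γ (i + 1) := by
      intro i
      induction i with
      | zero => intro _; simpa using h
      | succ i ih =>
        intro hi
        calc γ (i + 1) = H (γ i) := hstep i (by omega)
          _ ≤ H (γ (i + 1)) := hmono (ih (by omega))
          _ = γ (i + 1 + 1) := (hstep (i + 1) hi).symm
    have hle : ∀ j, 1 ≤ j → j ≤ d → γ 1 ≤ γ j := by
      intro j
      induction j with
      | zero => omega
      | succ j ih =>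
        intro _ hj
        rcases Nat.eq_zero_or_pos j with h0 | h0
        · subst h0; simp
        · exact le_trans (ih h0 (by omega)) (hasc j (by omega))
    have := hle d hd le_rfl
    omega

lemma alpha_divided (n m : ℕ) (hn : 0 < n) (τ : Fin n → ℕ)
    (hh : ∀ t v, (chipU n)^[t] τ v + 2 ≤ 2 * n)
    (d m' k' : ℕ) (hd : 1 ≤ d) (hm' : m = d * m')
    (hA : chipAlpha n τ m = n * (d * k')) :
    chipAlpha n τ m' = n * k' := by
  set G := (chipN n τ)^[m'] with hG
  have hGmono : Monotone G := (chipN_mono n τ).iterate m'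
  have hGshift : ∀ x j, G (x + n * j) = G x + n * j := fun x j =>
    chipN_iter_shift n hn τ m' x j
  have halpha : ∀ i, chipAlpha n τ ((i + 1) * m') = G (chipAlpha n τ (i * m')) := by
    intro i
    have e : (i + 1) * m' = m' + i * m' := by ring
    rw [e, alpha_iterate n τ hh, alpha_iterate n τ hh (i * m'),
      Function.iterate_add_apply]
  set γ : ℕ → ℕ := fun i => chipAlpha n τ (i * m') + (d - i) * (n * k') with hγ
  have hstep : ∀ i < d, γ (i + 1) = (fun x => G x - n * k') (γ i) := by
    intro i hi
    simp only [hγ]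
    have e1 : (d - i) * (n * k') = n * ((d - i) * k') := by ring
    have e2 : G (chipAlpha n τ (i * m') + (d - i) * (n * k'))
        = chipAlpha n τ ((i + 1) * m') + (d - i) * (n * k') := by
      rw [e1, hGshift, halpha, ← e1]
    rw [e2]
    have e3 : (d - i) * (n * k') = (d - (i + 1)) * (n * k') + n * k' := by
      have h4 : d - i = (d - (i + 1)) + 1 := by omega
      rw [h4]; ring
    omega
  have hcyc : γ d = γ 0 := by
    simp only [hγ]
    rw [← hm', hA]
    simp [chipAlpha]
    ring
  have h1 := chain_lemma (fun x => G x - n * k')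
    (fun x y hxy => Nat.sub_le_sub_right (hGmono hxy) _) d hd γ hstep hcyc
  simp only [hγ] at h1
  have e5 : d * (n * k') = (d - 1) * (n * k') + n * k' := by
    have h4 : d = (d - 1) + 1 := by omega
    conv_lhs => rw [h4]
    ring
  simp only [one_mul, Nat.zero_mul, Nat.sub_zero] at h1
  have h6 : chipAlpha n τ 0 = 0 := by simp [chipAlpha]
  omega

lemma config_formula (n : ℕ) (τ : Fin n → ℕ)
    (hh : ∀ t v, (chipU n)^[t] τ v + 2 ≤ 2 * n) :
    ∀ t v, (chipU n)^[t + 1] τ v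
      = (τ v + chipAlpha n τ t) % n + chipR n ((chipU n)^[t] τ) := by
  intro t v
  have hc := conservation n τ (t + 1) v
  have hu := odometer_formula n τ hh t v
  have hα := chipAlpha_succ n τ t
  have hdm := Nat.div_add_mod (τ v + chipAlpha n τ t) n
  rw [hu] at hc
  omega

lemma cycle_period_shrink (n m : ℕ) (hn : 0 < n) (hm : 1 ≤ m) (τ : Fin n → ℕ)
    (hpure : (chipU n)^[m] τ = τ)
    (hnofix : ∀ t, chipU n ((chipU n)^[t] τ) ≠ (chipU n)^[t] τ)
    (k : ℕ) (hk : chipAlpha n τ m = n * k) :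
    (chipU n)^[m / Nat.gcd k m] (chipU n τ) = chipU n τ := by
  have hr := chipR_bounds n τ hnofix
  have hh := height_bound n m hn hm τ hpure hr
  set d := Nat.gcd k m with hdd
  have hd : 1 ≤ d := Nat.gcd_pos_of_pos_right k hm
  set m' := m / d with hm'd
  set k' := k / d with hk'd
  have hm' : m = d * m' := (Nat.div_mul_cancel (Nat.gcd_dvd_right k m)).symm.trans (mul_comm _ _)
  have hk' : k = d * k' := (Nat.div_mul_cancel (Nat.gcd_dvd_left k m)).symm.trans (mul_comm _ _)
  have hαm' : chipAlpha n τ m' = n * k' :=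
    alpha_divided n m hn τ hh d m' k' hd hm' (by rw [hk, hk'])
  have key : (chipU n)^[m' + 1] τ = (chipU n)^[0 + 1] τ := by
    funext v
    rw [config_formula n τ hh m' v, config_formula n τ hh 0 v]
    have hmod : (τ v + chipAlpha n τ m') % n = (τ v + chipAlpha n τ 0) % n := by
      rw [hαm']
      simp [chipAlpha, Nat.add_mul_mod_self_left]
    have hrr : chipR n ((chipU n)^[m'] τ) = chipR n ((chipU n)^[0] τ) := by
      have h1 := chipAlpha_succ n τ m'
      have h2 := chipAlpha_succ n τ 0
      have h3 := alpha_recursion n τ hh m'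
      have h4 := alpha_recursion n τ hh 0
      have h5 : chipN n τ (chipAlpha n τ m') = chipN n τ (chipAlpha n τ 0) + n * k' := by
        rw [hαm']
        have : chipAlpha n τ 0 = 0 := by simp [chipAlpha]
        rw [this]
        have := chipN_shift n hn τ 0 k'
        simpa using this
      have h6 : chipAlpha n τ 0 = 0 := by simp [chipAlpha]
      omega
    rw [hmod, hrr]
  rw [Function.iterate_succ_apply, Function.iterate_succ_apply] at key
  simpa using key

lemma chipAlpha_shift (n : ℕ) (σ : Fin n → ℕ) (t₀ : ℕ) :
    ∀ s, chipAlpha n σ (t₀ + s)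
      = chipAlpha n σ t₀ + chipAlpha n ((chipU n)^[t₀] σ) s := by
  intro s
  induction s with
  | zero => simp [chipAlpha]
  | succ s ih =>
    have e : t₀ + (s + 1) = (t₀ + s) + 1 := by ring
    rw [e, chipAlpha_succ, chipAlpha_succ, ih]
    have e2 : (chipU n)^[t₀ + s] σ = (chipU n)^[s] ((chipU n)^[t₀] σ) := by
      rw [add_comm, Function.iterate_add_apply]
    rw [e2]
    ring

lemma alpha_period (n m : ℕ) (τ : Fin n → ℕ) (hpure : (chipU n)^[m] τ = τ) :
    ∀ t, chipAlpha n τ (t + m) = chipAlpha n τ t + chipAlpha n τ m := by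
  intro t
  induction t with
  | zero => simp [chipAlpha]
  | succ t ih =>
    have e : t + 1 + m = (t + m) + 1 := by ring
    rw [e, chipAlpha_succ, chipAlpha_succ, ih, iterate_period n m τ hpure t]
    ring

lemma alpha_mul (n m : ℕ) (τ : Fin n → ℕ) (hpure : (chipU n)^[m] τ = τ) :
    ∀ j s, chipAlpha n τ (j * m + s) = j * chipAlpha n τ m + chipAlpha n τ s := by
  intro j s
  induction j with
  | zero => simp
  | succ j ih =>
    have e : (j + 1) * m + s = (j * m + s) + m := by ring
    rw [e, alpha_period n m τ hpure, ih]
    ring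

lemma alpha_mono (n : ℕ) (σ : Fin n → ℕ) {s t : ℕ} (hst : s ≤ t) :
    chipAlpha n σ s ≤ chipAlpha n σ t :=
  Finset.sum_le_sum_of_subset (Finset.range_subset_range.mpr hst)

lemma activity_key (n : ℕ) (σ : Fin n → ℕ) (t₀ m : ℕ) (hm : 1 ≤ m)
    (hpure : (chipU n)^[m] ((chipU n)^[t₀] σ) = (chipU n)^[t₀] σ) :
    ∀ t, t₀ ≤ t →
      chipAlpha n ((chipU n)^[t₀] σ) m * t
          ≤ m * chipAlpha n σ t
            + (m * chipAlpha n σ t₀ + m * chipAlpha n ((chipU n)^[t₀] σ) m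
              + chipAlpha n ((chipU n)^[t₀] σ) m * t₀
              + chipAlpha n ((chipU n)^[t₀] σ) m * m)
      ∧ m * chipAlpha n σ t
          ≤ chipAlpha n ((chipU n)^[t₀] σ) m * t
            + (m * chipAlpha n σ t₀ + m * chipAlpha n ((chipU n)^[t₀] σ) m
              + chipAlpha n ((chipU n)^[t₀] σ) m * t₀
              + chipAlpha n ((chipU n)^[t₀] σ) m * m) := by
  intro t ht
  set τ := (chipU n)^[t₀] σ with hτ
  set A := chipAlpha n τ m with hA
  set s := t - t₀ with hs
  set j := s / m with hj
  set s' := s % m with hs'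
  have he : s = j * m + s' := by
    rw [hj, hs', mul_comm]
    exact (Nat.div_add_mod s m).symm
  have hts : t = t₀ + s := by omega
  have hsplit : chipAlpha n σ t = chipAlpha n σ t₀ + (j * A + chipAlpha n τ s') := by
    rw [hts, chipAlpha_shift, he, alpha_mul n m τ hpure]
  have hs'm : s' < m := Nat.mod_lt s hm
  have hb1 : chipAlpha n τ s' ≤ A := alpha_mono n τ (le_of_lt hs'm)
  have e1 : A * t = A * t₀ + m * (j * A) + A * s' := by
    rw [hts, he]; ring
  have e2 : m * chipAlpha n σ t
      = m * chipAlpha n σ t₀ + m * (j * A) + m * chipAlpha n τ s' := by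
    rw [hsplit]; ring
  have e3 : m * chipAlpha n τ s' ≤ m * A := Nat.mul_le_mul_left m hb1
  have e4 : A * s' ≤ A * m := Nat.mul_le_mul_left A (le_of_lt hs'm)
  omega

lemma activity_tendsto (n : ℕ) (hn : 0 < n) (σ : Fin n → ℕ) (t₀ m : ℕ) (hm : 1 ≤ m)
    (hpure : (chipU n)^[m] ((chipU n)^[t₀] σ) = (chipU n)^[t₀] σ) :
    Filter.Tendsto (fun t : ℕ => (chipAlpha n σ t : ℝ) / (n * t)) Filter.atTop
      (nhds ((chipAlpha n ((chipU n)^[t₀] σ) m : ℝ) / (n * m))) := by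
  set τ := (chipU n)^[t₀] σ with hτ
  set A := chipAlpha n τ m with hA
  set C : ℕ := m * chipAlpha n σ t₀ + m * A + A * t₀ + A * m with hC
  set L : ℝ := (A : ℝ) / (n * m) with hL
  have hnm : (0:ℝ) < (n:ℝ) * m := by positivity
  have h0 : Filter.Tendsto (fun t : ℕ => (chipAlpha n σ t : ℝ) / (n * t) - L)
      Filter.atTop (nhds 0) := by
    apply squeeze_zero_norm' (a := fun t : ℕ => (C : ℝ) / ((n : ℝ) * m) * (1 / t))
    · filter_upwards [Filter.eventually_ge_atTop (max t₀ 1)] with t ht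
      have ht₀ : t₀ ≤ t := le_trans (le_max_left _ _) ht
      have ht1 : 1 ≤ t := le_trans (le_max_right _ _) ht
      have htpos : (0:ℝ) < (t:ℝ) := by exact_mod_cast ht1
      obtain ⟨k1, k2⟩ := activity_key n σ t₀ m hm hpure t ht₀
      have hb : |(m : ℝ) * chipAlpha n σ t - (A : ℝ) * t| ≤ (C : ℝ) := by
        rw [abs_le]
        constructor
        · have : (A : ℝ) * t ≤ (m : ℝ) * chipAlpha n σ t + C := by exact_mod_cast k1
          linarith
        · have : (m : ℝ) * chipAlpha n σ t ≤ (A : ℝ) * t + C := by exact_mod_cast k2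
          linarith
      have heq : (chipAlpha n σ t : ℝ) / (n * t) - L
          = ((m : ℝ) * chipAlpha n σ t - (A : ℝ) * t) / ((n : ℝ) * m * t) := by
        rw [hL]
        field_simp
      rw [Real.norm_eq_abs, heq, abs_div]
      have hden : |(n : ℝ) * m * t| = (n : ℝ) * m * t := by
        rw [abs_of_pos]; positivity
      rw [hden]
      have hrhs : (C : ℝ) / ((n : ℝ) * m) * (1 / t) = (C : ℝ) / ((n : ℝ) * m * t) := by
        field_simp
      rw [hrhs]
      gcongr
    · have := tendsto_one_div_atTop_nhds_zero_nat.const_mul ((C : ℝ) / ((n : ℝ) * m))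
      simpa using this
  have h1 : Filter.Tendsto (fun _ : ℕ => L) Filter.atTop (nhds L) :=
    tendsto_const_nhds
  have h2 := h0.add h1
  simp only [zero_add, sub_add_cancel] at h2
  exact h2

theorem period_eq_denominator_of_activity (n : ℕ) (hn : 0 < n) (σ : Fin n → ℕ)
    (p q : ℕ) (hq : 0 < q) (hpq : Nat.Coprime p q)
    (ha : Activity n σ ((p : ℝ) / (q : ℝ))) :
    eventualPeriod n σ = q := by
  classical
  obtain ⟨m₀, hm₀1, t₀', hper'⟩ := exists_period n σ
  have hSne : {m | 1 ≤ m ∧ ∃ t₀, ∀ t ≥ t₀, (chipU n)^[t + m] σ = (chipU n)^[t] σ}.Nonempty :=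
    ⟨m₀, hm₀1, t₀', hper'⟩
  have hmS : eventualPeriod n σ ∈
      {m | 1 ≤ m ∧ ∃ t₀, ∀ t ≥ t₀, (chipU n)^[t + m] σ = (chipU n)^[t] σ} := by
    rw [eventualPeriod]
    exact Nat.sInf_mem hSne
  set m := eventualPeriod n σ with hmdef
  obtain ⟨hm1, t₀, hper⟩ := hmS
  set τ := (chipU n)^[t₀] σ with hτ
  have hpure : (chipU n)^[m] τ = τ := by
    have h := hper t₀ le_rfl
    rwa [add_comm, Function.iterate_add_apply] at h
  -- each vertex fires equally often over one period
  have hueq : ∀ v, n * odometer n τ m v = chipAlpha n τ m := by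
    intro v
    have hc := conservation n τ m v
    rw [hpure] at hc
    omega
  set k := odometer n τ m ⟨0, hn⟩ with hkdef
  have hk : chipAlpha n τ m = n * k := (hueq _).symm
  -- identify the activity
  have htend := activity_tendsto n hn σ t₀ m hm1 hpure
  have hEq : (p : ℝ) / (q : ℝ) = (chipAlpha n τ m : ℝ) / (n * m) :=
    tendsto_nhds_unique ha htend
  have hq0 : ((q : ℝ)) ≠ 0 := by positivity
  have hnm0 : ((n : ℝ) * m) ≠ 0 := by positivity
  have hcross : (p : ℝ) * ((n : ℝ) * m) = (chipAlpha n τ m : ℝ) * q :=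
    (div_eq_div_iff hq0 hnm0).mp hEq
  have hnat : p * (n * m) = chipAlpha n τ m * q := by exact_mod_cast hcross
  have h8 : p * m = k * q := by
    have h7 : n * (p * m) = n * (k * q) := by
      calc n * (p * m) = p * (n * m) := by ring
        _ = chipAlpha n τ m * q := hnat
        _ = n * (k * q) := by rw [hk]; ring
    exact Nat.eq_of_mul_eq_mul_left hn h7
  -- the period is coprime to the per-vertex firing count
  have hcop : Nat.gcd k m = 1 := by
    rcases Nat.lt_or_ge m 2 with h2 | h2
    · have : m = 1 := by omega
      rw [this]
      exact Nat.gcd_one_right k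
    · have hnofix : ∀ t, chipU n ((chipU n)^[t] τ) ≠ (chipU n)^[t] τ := by
        intro t hfix
        have hbase : (chipU n)^[t₀ + t] σ = (chipU n)^[t] τ := by
          rw [add_comm, Function.iterate_add_apply]
        have hstick : ∀ j, (chipU n)^[t₀ + t + j] σ = (chipU n)^[t] τ := by
          intro j
          induction j with
          | zero => simpa using hbase
          | succ j ih =>
            have e : t₀ + t + (j + 1) = (t₀ + t + j) + 1 := by ring
            rw [e, Function.iterate_succ_apply', ih, hfix]
        have h1S : (1 : ℕ) ∈
            {m | 1 ≤ m ∧ ∃ t₀, ∀ t ≥ t₀, (chipU n)^[t + m] σ = (chipU n)^[t] σ} := by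
          refine ⟨le_rfl, t₀ + t, fun s hs => ?_⟩
          have e1 : s + 1 = t₀ + t + (s - (t₀ + t) + 1) := by omega
          have e2 : s = t₀ + t + (s - (t₀ + t)) := by omega
          rw [e1, hstick, e2, hstick]
        have hle : m ≤ 1 := Nat.sInf_le h1S
        omega
      have hshr := cycle_period_shrink n m hn hm1 τ hpure hnofix k hk
      set d := Nat.gcd k m with hdd
      have hd1 : 1 ≤ d := Nat.gcd_pos_of_pos_right k (by omega)
      by_contra hne
      have hd2 : 2 ≤ d := by omega
      set m' := m / d with hm'd
      have hm'1 : 1 ≤ m' := by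
        apply Nat.div_pos (Nat.le_of_dvd (by omega) (Nat.gcd_dvd_right k m)) (by omega)
      have hm'S : m' ∈
          {m | 1 ≤ m ∧ ∃ t₀, ∀ t ≥ t₀, (chipU n)^[t + m] σ = (chipU n)^[t] σ} := by
        refine ⟨hm'1, t₀ + 1, fun t ht => ?_⟩
        have hτ1 : (chipU n)^[t₀ + 1] σ = chipU n τ := by
          rw [add_comm, Function.iterate_add_apply]
          simp [hτ]
        have e1 : t + m' = (t - (t₀ + 1) + m') + (t₀ + 1) := by omega
        have e2 : t = (t - (t₀ + 1)) + (t₀ + 1) := by omega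
        rw [e1, Function.iterate_add_apply, hτ1, Function.iterate_add_apply, hshr,
          ← hτ1, ← Function.iterate_add_apply, ← e2]
      have hle : m ≤ m' := Nat.sInf_le hm'S
      have hlt : m' < m := Nat.div_lt_self (by omega) hd2
      omega
  -- conclude m = q
  have hmq : m ∣ q := by
    have hcm : Nat.Coprime m k := Nat.coprime_comm.mp hcop
    apply hcm.dvd_of_dvd_mul_right (m := q)
    exact ⟨p, by rw [mul_comm q k, ← h8, mul_comm p m]⟩
  have hqm : q ∣ m := by
    have hcq : Nat.Coprime q p := hpq.symm
    apply hcq.dvd_of_dvd_mul_right (m := m)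
    exact ⟨k, by rw [mul_comm m p, h8, mul_comm k q]⟩
  exact Nat.dvd_antisymm hmq hqm
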